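/- Let a, b be coprime integers with a odd, and c an integer. Define Q_c(s,t,φ) = (T_c(t+φ) − T_c(s+φ))/(t−s) and R_{a,b,c}(φ) = ∏_{i=1}^{(a−1)/2} ∏_{j=1}^{b−1} Q_c(2cos(iπ/a + jπ/b), 2cos(iπ/a − jπ/b), φ). Then R_{a,b,c} is a polynomial in φ with integer coefficients. -/

import Mathlib

open Polynomial Real

/-- The monic Chebyshev polynomials of the first kind. -/
noncomputable def T : ℕ → Polynomial ℝ
  | 0 => 2
  | 1 => X
  | n + 2 => X * T (n + 1) - T n

/-- \`Q c s t φ = (T_c(t+φ) − T_c(s+φ))/(t−s)\`. -/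
noncomputable def Q (c : ℕ) (s t φ : ℝ) : ℝ :=
  ((T c).eval (t + φ) - (T c).eval (s + φ)) / (t - s)

/-- The discriminant function \`R a b c φ\`. -/
noncomputable def R (a b c : ℕ) (φ : ℝ) : ℝ :=
  ∏ i ∈ Finset.Icc 1 ((a - 1) / 2), ∏ j ∈ Finset.Icc 1 (b - 1),
    Q c (2 * Real.cos ((i : ℝ) * Real.pi / a + (j : ℝ) * Real.pi / b))
        (2 * Real.cos ((i : ℝ) * Real.pi / a - (j : ℝ) * Real.pi / b)) φ

noncomputable section Aux

/-- Integer monic Chebyshev polynomials of the first kind. -/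
def Tz : ℕ → Polynomial ℤ
  | 0 => 2
  | 1 => Polynomial.X
  | n + 2 => Polynomial.X * Tz (n + 1) - Tz n

/-- Integer monic Chebyshev polynomials of the second kind. -/
def Sz : ℕ → Polynomial ℤ
  | 0 => 1
  | 1 => Polynomial.X
  | n + 2 => Polynomial.X * Sz (n + 1) - Sz n

/-- Even part of `Sz (2*m)`. -/
def Wz : ℕ → Polynomial ℤ
  | 0 => 1
  | 1 => Polynomial.X - 1
  | n + 2 => (Polynomial.X - 2) * Wz (n + 1) - Wz n

def pmap : Polynomial ℤ →+* Polynomial ℝ := Polynomial.mapRingHom (Int.castRingHom ℝ)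

lemma Tz_map : ∀ c, (Tz c).map (Int.castRingHom ℝ) = T c
  | 0 => by simp [Tz, T]
  | 1 => by simp [Tz, T]
  | n + 2 => by
      rw [Tz, T, Polynomial.map_sub, Polynomial.map_mul, Polynomial.map_X,
        Tz_map (n + 1), Tz_map n]

lemma Sz_monic_deg : ∀ n, (Sz n).Monic ∧ (Sz n).natDegree = n
  | 0 => ⟨monic_one, natDegree_one⟩
  | 1 => ⟨monic_X, natDegree_X⟩
  | n + 2 => by
      obtain ⟨h1, d1⟩ := Sz_monic_deg (n + 1)
      obtain ⟨h0, d0⟩ := Sz_monic_deg n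
      have hXm : (Polynomial.X * Sz (n + 1)).Monic := monic_X.mul h1
      have hd : (Polynomial.X * Sz (n + 1)).natDegree = n + 2 := by
        rw [natDegree_mul X_ne_zero h1.ne_zero, natDegree_X, d1]; omega
      have hlt : (Sz n).degree < (Polynomial.X * Sz (n + 1)).degree := by
        rw [degree_eq_natDegree h0.ne_zero, degree_eq_natDegree hXm.ne_zero, hd, d0]
        exact_mod_cast by omega
      constructor
      · rw [Sz]; exact hXm.sub_of_left hlt
      · rw [Sz, natDegree_sub_eq_left_of_natDegree_lt, hd]
        rw [hd, d0]; omega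

lemma Wz_monic_deg : ∀ n, (Wz n).Monic ∧ (Wz n).natDegree = n
  | 0 => ⟨monic_one, natDegree_one⟩
  | 1 => by
      have h : (Polynomial.X - 1 : Polynomial ℤ) = Polynomial.X - Polynomial.C 1 := by
        rw [Polynomial.C_1]
      constructor
      · rw [Wz, h]; exact monic_X_sub_C 1
      · rw [Wz, h, natDegree_X_sub_C]
  | n + 2 => by
      obtain ⟨h1, d1⟩ := Wz_monic_deg (n + 1)
      obtain ⟨h0, d0⟩ := Wz_monic_deg n
      have h : (Polynomial.X - 2 : Polynomial ℤ) = Polynomial.X - Polynomial.C 2 := by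
        rw [map_ofNat]
      have hX2 : (Polynomial.X - 2 : Polynomial ℤ).Monic := by rw [h]; exact monic_X_sub_C 2
      have hd2 : (Polynomial.X - 2 : Polynomial ℤ).natDegree = 1 := by
        rw [h, natDegree_X_sub_C]
      have hXm : ((Polynomial.X - 2) * Wz (n + 1)).Monic := hX2.mul h1
      have hd : ((Polynomial.X - 2) * Wz (n + 1)).natDegree = n + 2 := by
        rw [natDegree_mul hX2.ne_zero h1.ne_zero, hd2, d1]; omega
      have hlt : (Wz n).degree < ((Polynomial.X - 2) * Wz (n + 1)).degree := by
        rw [degree_eq_natDegree h0.ne_zero, degree_eq_natDegree hXm.ne_zero, hd, d0]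
        exact_mod_cast by omega
      constructor
      · rw [Wz]; exact hXm.sub_of_left hlt
      · rw [Wz, natDegree_sub_eq_left_of_natDegree_lt, hd]
        rw [hd, d0]; omega

lemma Sz_eval (n : ℕ) (θ : ℝ) :
    ((Sz n).map (Int.castRingHom ℝ)).eval (2 * Real.cos θ) * Real.sin θ
      = Real.sin ((n + 1) * θ) := by
  induction n using Nat.strong_induction_on with
  | _ n ih =>
    match n with
    | 0 => simp [Sz]
    | 1 =>
      rw [Sz, Polynomial.map_X, eval_X]
      push_cast
      rw [show ((1:ℝ) + 1) * θ = 2 * θ by ring, Real.sin_two_mul]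
      ring
    | n + 2 =>
      have IH1 := ih (n + 1) (by omega)
      have IH0 := ih n (by omega)
      rw [Sz, Polynomial.map_sub, Polynomial.map_mul, Polynomial.map_X, eval_sub, eval_mul,
        eval_X]
      push_cast at IH1 IH0 ⊢
      have h3 : Real.sin (((n : ℝ) + 1) * θ)
          = Real.sin (((n : ℝ) + 1 + 1) * θ) * Real.cos θ
            - Real.cos (((n : ℝ) + 1 + 1) * θ) * Real.sin θ := by
        rw [show ((n : ℝ) + 1) * θ = ((n : ℝ) + 1 + 1) * θ - θ by ring, Real.sin_sub]
      rw [show ((n : ℝ) + 2 + 1) * θ = ((n : ℝ) + 1 + 1) * θ + θ by ring, Real.sin_add]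
      linear_combination (2 * Real.cos θ) * IH1 - IH0 - h3

lemma Sz_four (k : ℕ) :
    Sz (k + 4) = (Polynomial.X ^ 2 - 2) * Sz (k + 2) - Sz k := by
  have e4 : Sz (k + 4) = Polynomial.X * Sz (k + 3) - Sz (k + 2) := rfl
  have e3 : Sz (k + 3) = Polynomial.X * Sz (k + 2) - Sz (k + 1) := rfl
  have e2 : Sz (k + 2) = Polynomial.X * Sz (k + 1) - Sz k := rfl
  rw [e4, e3]
  rw [e2]
  ring

lemma Wz_comp : ∀ m, (Wz m).comp (Polynomial.X ^ 2) = Sz (2 * m)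
  | 0 => by simp [Wz, Sz]
  | 1 => by
      have h2 : Sz 2 = Polynomial.X * Sz 1 - Sz 0 := rfl
      simp [Wz, h2, Sz]; ring
  | m + 2 => by
      have I1 := Wz_comp (m + 1)
      have I0 := Wz_comp m
      rw [show 2 * (m + 1) = 2 * m + 2 from by omega] at I1
      have c2 : (2 : Polynomial ℤ).comp (Polynomial.X ^ 2) = 2 := by simp
      rw [show 2 * (m + 2) = 2 * m + 4 from by omega, Sz_four, Wz, sub_comp, mul_comp, sub_comp,
        X_comp, c2, I1, I0]

/-- A monic real polynomial of degree `n` with `n` distinct roots is the product of the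
corresponding linear factors. -/
lemma monic_eq_prod {n : ℕ} (p : Polynomial ℝ) (hm : p.Monic) (hd : p.natDegree = n)
    (r : Fin n → ℝ) (hinj : Function.Injective r) (h0 : ∀ k, p.eval (r k) = 0) :
    p = ∏ k : Fin n, (Polynomial.X - Polynomial.C (r k)) := by
  set q := ∏ k : Fin n, (Polynomial.X - Polynomial.C (r k)) with hq
  have hqm : q.Monic := monic_prod_of_monic _ _ fun k _ => monic_X_sub_C (r k)
  have hqd : q.natDegree = n := by
    rw [hq, natDegree_prod _ _ fun k _ => X_sub_C_ne_zero (r k)]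
    simp [natDegree_X_sub_C]
  by_cases hn : p - q = 0
  · exact sub_eq_zero.mp hn
  · exfalso
    have hdeg : (p - q).degree < p.degree := by
      refine Polynomial.degree_sub_lt ?_ hm.ne_zero ?_
      · rw [degree_eq_natDegree hm.ne_zero, degree_eq_natDegree hqm.ne_zero, hd, hqd]
      · rw [hm.leadingCoeff, hqm.leadingCoeff]
    have hdeg' : (p - q).natDegree < n := by
      rw [natDegree_lt_iff_degree_lt hn]
      refine hdeg.trans_le ?_
      rw [degree_eq_natDegree hm.ne_zero, hd]
    have hev : ∀ k : Fin n, (p - q).eval (r k) = 0 := by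
      intro k
      have hqe : q.eval (r k) = 0 := by
        rw [hq, eval_prod]
        refine Finset.prod_eq_zero (Finset.mem_univ k) ?_
        simp
      rw [eval_sub, h0 k, hqe, sub_zero]
    have := Polynomial.eq_zero_of_natDegree_lt_card_of_eval_eq_zero (p - q) hinj hev
      (by rwa [Fintype.card_fin])
    exact hn this

lemma Sz_prod (b : ℕ) : (Sz (b - 1)).map (Int.castRingHom ℝ)
    = ∏ k : Fin (b - 1),
        (Polynomial.X - Polynomial.C (2 * Real.cos (((k : ℕ) + 1) * Real.pi / b))) := by
  rcases Nat.eq_zero_or_pos b with rfl | hb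
  · simp [Sz]
  have hbR : (0 : ℝ) < b := by exact_mod_cast hb
  have hang : ∀ k : Fin (b - 1), 0 < (((k : ℕ) + 1) * Real.pi / b) ∧
      (((k : ℕ) + 1) * Real.pi / b) < Real.pi := by
    intro k
    have hk : (k : ℕ) + 1 < b := by have := k.isLt; omega
    constructor
    · positivity
    · rw [div_lt_iff₀ hbR]
      have : ((k : ℕ) + 1 : ℝ) < b := by exact_mod_cast (by omega : (k : ℕ) + 1 < b)
      nlinarith [Real.pi_pos]
  refine monic_eq_prod _ ((Sz_monic_deg (b - 1)).1.map _) ?_ _ ?_ ?_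
  · rw [(Sz_monic_deg (b - 1)).1.natDegree_map, (Sz_monic_deg (b - 1)).2]
  · intro k l hkl
    have h1 := hang k
    have h2 := hang l
    have := Real.injOn_cos ⟨le_of_lt h1.1, le_of_lt h1.2⟩ ⟨le_of_lt h2.1, le_of_lt h2.2⟩
      (by linarith)
    have hne : ((k : ℕ) : ℝ) = ((l : ℕ) : ℝ) := by
      field_simp at this
      linarith
    exact Fin.ext (by exact_mod_cast hne)
  · intro k
    set θ := (((k : ℕ) + 1) * Real.pi / b) with hθ
    have hs := Sz_eval (b - 1) θ
    have hbb : (((b - 1 : ℕ) : ℝ) + 1) = (b : ℝ) := by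
      have h1b : (1 : ℕ) ≤ b := hb
      rw [Nat.cast_sub h1b]
      push_cast
      ring
    rw [hbb] at hs
    have hbθ : (b : ℝ) * θ = (((k : ℕ) + 1 : ℕ) : ℝ) * Real.pi := by
      have hbne : (b : ℝ) ≠ 0 := ne_of_gt hbR
      rw [hθ]
      push_cast
      field_simp
    rw [hbθ, Real.sin_nat_mul_pi] at hs
    have hsθ : Real.sin θ ≠ 0 := ne_of_gt (Real.sin_pos_of_pos_of_lt_pi (hang k).1 (hang k).2)
    exact (mul_eq_zero.mp hs).resolve_right hsθ

lemma Wz_prod (m : ℕ) : (Wz m).map (Int.castRingHom ℝ)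
    = ∏ i : Fin m,
        (Polynomial.X -
          Polynomial.C ((2 * Real.cos (((i : ℕ) + 1) * Real.pi / (2 * m + 1))) ^ 2)) := by
  have haR : (0 : ℝ) < 2 * m + 1 := by positivity
  have hang : ∀ i : Fin m, 0 < (((i : ℕ) + 1) * Real.pi / (2 * m + 1)) ∧
      (((i : ℕ) + 1) * Real.pi / (2 * m + 1)) < Real.pi / 2 := by
    intro i
    constructor
    · positivity
    · rw [div_lt_div_iff₀ haR two_pos]
      have : ((i : ℕ) + 1 : ℝ) ≤ m := by exact_mod_cast (by omega : (i : ℕ) + 1 ≤ m)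
      nlinarith [Real.pi_pos]
  have hcospos : ∀ i : Fin m, 0 < Real.cos (((i : ℕ) + 1) * Real.pi / (2 * m + 1)) := by
    intro i
    refine Real.cos_pos_of_mem_Ioo ⟨?_, (hang i).2⟩
    linarith [(hang i).1, Real.pi_pos]
  refine monic_eq_prod _ ((Wz_monic_deg m).1.map _) ?_ _ ?_ ?_
  · rw [(Wz_monic_deg m).1.natDegree_map, (Wz_monic_deg m).2]
  · intro i l hil
    have h1 := hcospos i
    have h2 := hcospos l
    have hcc : Real.cos (((i : ℕ) + 1) * Real.pi / (2 * m + 1))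
        = Real.cos (((l : ℕ) + 1) * Real.pi / (2 * m + 1)) := by nlinarith
    have hi1 := hang i
    have hl1 := hang l
    have := Real.injOn_cos ⟨le_of_lt hi1.1, by linarith [Real.pi_pos]⟩
      ⟨le_of_lt hl1.1, by linarith [Real.pi_pos]⟩ hcc
    have hne : ((i : ℕ) : ℝ) = ((l : ℕ) : ℝ) := by
      field_simp at this
      linarith
    exact Fin.ext (by exact_mod_cast hne)
  · intro i
    set θ := (((i : ℕ) + 1) * Real.pi / (2 * m + 1)) with hθ
    have hcomp : ((Wz m).map (Int.castRingHom ℝ)).comp (Polynomial.X ^ 2)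
        = (Sz (2 * m)).map (Int.castRingHom ℝ) := by
      have hX2 : (Polynomial.X ^ 2 : Polynomial ℝ)
          = (Polynomial.X ^ 2 : Polynomial ℤ).map (Int.castRingHom ℝ) := by simp
      rw [hX2, ← Polynomial.map_comp, Wz_comp]
    have he : ((Wz m).map (Int.castRingHom ℝ)).eval ((2 * Real.cos θ) ^ 2)
        = ((Sz (2 * m)).map (Int.castRingHom ℝ)).eval (2 * Real.cos θ) := by
      rw [← hcomp, eval_comp]
      simp
    rw [he]
    have hs := Sz_eval (2 * m) θ
    have hbθ : (((2 * m : ℕ) : ℝ) + 1) * θ = (((i : ℕ) + 1 : ℕ) : ℝ) * Real.pi := by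
      have hne : (2 * (m : ℝ) + 1) ≠ 0 := ne_of_gt haR
      rw [hθ]
      push_cast
      field_simp
    rw [hbθ, Real.sin_nat_mul_pi] at hs
    have hsθ : Real.sin θ ≠ 0 := by
      refine ne_of_gt (Real.sin_pos_of_pos_of_lt_pi (hang i).1 ?_)
      linarith [(hang i).2, Real.pi_pos]
    exact (mul_eq_zero.mp hs).resolve_right hsθ

lemma comp_neg_X_coeff {A : Type} [CommRing A] (p : Polynomial A) (j : ℕ) :
    (p.comp (-Polynomial.X)).coeff j = (-1) ^ j * p.coeff j := by
  induction p using Polynomial.induction_on' with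
  | add f g hf hg => rw [add_comp, coeff_add, hf, hg, coeff_add, mul_add]
  | monomial n a =>
    rw [Polynomial.comp, Polynomial.eval₂_monomial, neg_pow]
    have h1 : Polynomial.C a * ((-1 : Polynomial A) ^ n * Polynomial.X ^ n)
        = Polynomial.C (a * (-1) ^ n) * Polynomial.X ^ n := by
      rw [map_mul, map_pow, map_neg, map_one]; ring
    rw [h1, Polynomial.coeff_C_mul, Polynomial.coeff_X_pow, Polynomial.coeff_monomial]
    by_cases h : j = n
    · subst h
      simp [mul_comm]
    · rw [if_neg h, if_neg fun hh => h hh.symm]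
      simp

/-- Polynomials with vanishing odd coefficients are polynomials in `X^2`. -/
lemma even_comp {A : Type} [CommRing A] (p : Polynomial A) (h : ∀ k, Odd k → p.coeff k = 0) :
    ∃ q : Polynomial A, q.comp (Polynomial.X ^ 2) = p := by
  refine ⟨∑ k ∈ Finset.range (p.natDegree + 1),
    Polynomial.C (p.coeff (2 * k)) * Polynomial.X ^ k, ?_⟩
  have hcomp : (∑ k ∈ Finset.range (p.natDegree + 1),
      Polynomial.C (p.coeff (2 * k)) * Polynomial.X ^ k).comp (Polynomial.X ^ 2)
      = ∑ k ∈ Finset.range (p.natDegree + 1),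
          Polynomial.C (p.coeff (2 * k)) * Polynomial.X ^ (2 * k) := by
    rw [Polynomial.comp, Polynomial.eval₂_finset_sum]
    refine Finset.sum_congr rfl fun k _ => ?_
    rw [Polynomial.eval₂_mul, Polynomial.eval₂_C, Polynomial.eval₂_X_pow, ← pow_mul]
  rw [hcomp]
  ext j
  rw [Polynomial.finset_sum_coeff]
  simp only [Polynomial.coeff_C_mul, Polynomial.coeff_X_pow]
  rcases Nat.even_or_odd j with he | ho
  · obtain ⟨t, rfl⟩ := he
    by_cases hle : 2 * t ≤ p.natDegree
    · rw [Finset.sum_eq_single t]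
      · simp [show t + t = 2 * t from by omega]
      · intro k hk hne
        have hne2 : ¬(t + t = 2 * k) := by omega
        simp [hne2]
      · intro habs
        exact absurd (Finset.mem_range.mpr (by omega)) habs
    · have hz : p.coeff (t + t) = 0 :=
        Polynomial.coeff_eq_zero_of_natDegree_lt (by omega)
      rw [hz]
      refine Finset.sum_eq_zero fun k hk => ?_
      have hk' := Finset.mem_range.mp hk
      by_cases hkt : t + t = 2 * k
      · have hz2 : p.coeff (2 * k) = 0 :=
          Polynomial.coeff_eq_zero_of_natDegree_lt (by omega)
        simp [hz2]
      · simp [hkt]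
  · rw [h _ ho]
    refine Finset.sum_eq_zero fun k hk => ?_
    have hne : ¬(j = 2 * k) := by rcases ho with ⟨t, rfl⟩; omega
    simp [hne]

/-- representation of a symmetric polynomial in terms of elementary symmetric polynomials. -/
lemma sym_rep {A : Type} [CommRing A] {n : ℕ} {P : MvPolynomial (Fin n) A}
    (hP : P.IsSymmetric) :
    ∃ F : MvPolynomial (Fin n) A,
      (MvPolynomial.aeval fun i : Fin n => MvPolynomial.esymm (Fin n) A ((i : ℕ) + 1)) F = P := by
  obtain ⟨F, hF⟩ := MvPolynomial.esymmAlgHom_surjective (σ := Fin n) (R := A) (n := n)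
      (by simp) ⟨P, (MvPolynomial.mem_symmetricSubalgebra P).2 hP⟩
  exact ⟨F, by rw [← MvPolynomial.esymmAlgHom_apply, hF]⟩

/-- Master lemma. -/
lemma master {A : Type} [CommRing A] {n : ℕ} (P : MvPolynomial (Fin n) A)
    (hP : P.IsSymmetric) (v : Fin n → A) :
    ∃ K : A, ∀ (B : Type) [CommRing B], ∀ (ev : A →+* B) (y : Fin n → B),
      (∀ k : Fin n, ev (v k) = (Multiset.map y Finset.univ.val).esymm ((k : ℕ) + 1)) →
      ev K = MvPolynomial.eval₂ ev y P := by
  obtain ⟨F, hF⟩ := sym_rep hP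
  refine ⟨MvPolynomial.eval v F, ?_⟩
  intro B _ ev y hy
  have h1 : ev (MvPolynomial.eval v F) = MvPolynomial.eval₂ ev (fun i => ev (v i)) F := by
    rw [← MvPolynomial.eval₂_id (g := v) F, MvPolynomial.eval₂_comp_left ev (RingHom.id A) v F]
    simp only [RingHom.comp_id]
    rfl
  have hes : ∀ j : ℕ, MvPolynomial.eval y (MvPolynomial.esymm (Fin n) B j)
      = (Multiset.map y Finset.univ.val).esymm j := by
    intro j
    have h := MvPolynomial.aeval_esymm_eq_multiset_esymm (σ := Fin n) (R := B) (S := B) j y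
    rwa [MvPolynomial.aeval_def, Algebra.algebraMap_self, MvPolynomial.eval₂_id] at h
  have h2 : MvPolynomial.eval₂ ev y P
      = MvPolynomial.eval₂ ev
          (fun i : Fin n => (Multiset.map y Finset.univ.val).esymm ((i : ℕ) + 1)) F := by
    rw [← hF, MvPolynomial.aeval_def, MvPolynomial.algebraMap_eq]
    have h3 := MvPolynomial.eval₂_comp_left (MvPolynomial.eval₂Hom ev y) MvPolynomial.C
      (fun i : Fin n => MvPolynomial.esymm (Fin n) A ((i : ℕ) + 1)) F
    simp only [MvPolynomial.coe_eval₂Hom] at h3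
    rw [h3]
    have hc : (MvPolynomial.eval₂Hom ev y).comp MvPolynomial.C = ev :=
      RingHom.ext fun a => by simp
    have hg : (MvPolynomial.eval₂ ev y ∘
          fun i : Fin n => MvPolynomial.esymm (Fin n) A ((i : ℕ) + 1))
        = fun i : Fin n => (Multiset.map y Finset.univ.val).esymm ((i : ℕ) + 1) := by
      funext i
      show MvPolynomial.eval₂ ev y (MvPolynomial.esymm (Fin n) A ((i : ℕ) + 1)) = _
      rw [MvPolynomial.eval₂_eq_eval_map, MvPolynomial.map_esymm, hes]
    rw [hc, hg]
  rw [h1, h2]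
  have : (fun i : Fin n => ev (v i))
      = fun i : Fin n => (Multiset.map y Finset.univ.val).esymm ((i : ℕ) + 1) := funext hy
  rw [this]

lemma esymm_map_C (n k : ℕ) (yr : Fin n → ℝ) :
    (Multiset.map (fun j => Polynomial.C (yr j)) (Finset.univ : Finset (Fin n)).val).esymm k
      = Polynomial.C ((Multiset.map yr (Finset.univ : Finset (Fin n)).val).esymm k) := by
  rw [Finset.esymm_map_val, Finset.esymm_map_val, map_sum]
  exact Finset.sum_congr rfl fun t _ => by rw [map_prod]

lemma esymm_val (n : ℕ) (w : Polynomial ℤ) (yr : Fin n → ℝ)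
    (hw : w.map (Int.castRingHom ℝ) = ∏ j : Fin n, (Polynomial.X - Polynomial.C (yr j)))
    (k : ℕ) (hk : k ≤ n) :
    (Multiset.map yr (Finset.univ : Finset (Fin n)).val).esymm k
      = (-1 : ℝ) ^ k * ((w.coeff (n - k) : ℤ) : ℝ) := by
  set s : Multiset ℝ := Multiset.map yr (Finset.univ : Finset (Fin n)).val with hs
  have hcard : Multiset.card s = n := by simp [hs]
  have h1 := Multiset.prod_X_sub_C_coeff s (k := n - k) (by rw [hcard]; omega)
  have hprod : (s.map fun t => Polynomial.X - Polynomial.C t).prod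
      = ∏ j : Fin n, (Polynomial.X - Polynomial.C (yr j)) := by
    rw [hs, Multiset.map_map]
    rfl
  rw [hprod, ← hw, Polynomial.coeff_map, hcard, show n - (n - k) = k from by omega] at h1
  have hsq : ((-1 : ℝ) ^ k) * ((-1 : ℝ) ^ k) = 1 := by
    rw [← pow_add]
    exact Even.neg_one_pow ⟨k, by omega⟩
  calc s.esymm k = ((-1:ℝ)^k * (-1:ℝ)^k) * s.esymm k := by rw [hsq, one_mul]
    _ = (-1:ℝ)^k * ((-1:ℝ)^k * s.esymm k) := by ring
    _ = (-1 : ℝ) ^ k * ((w.coeff (n - k) : ℤ) : ℝ) := by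
        rw [← h1]
        simp only [Int.coe_castRingHom]

lemma ringhom_aeval_int {S T : Type} [CommRing S] [CommRing T] (g : S →+* T) (w : S)
    (p : Polynomial ℤ) : g (Polynomial.aeval w p) = Polynomial.aeval (g w) p :=
  (Polynomial.aeval_algHom_apply g.toIntAlgHom w p).symm

lemma esymm_two {A : Type} [CommRing A] :
    MvPolynomial.esymm (Fin 2) A 2 = MvPolynomial.X 0 * MvPolynomial.X 1 := by
  have h := Finset.powersetCard_self (Finset.univ : Finset (Fin 2))
  rw [show (Finset.univ : Finset (Fin 2)).card = 2 from by simp] at h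
  rw [MvPolynomial.esymm, h, Finset.sum_singleton, Fin.prod_univ_two]

/-- the numerator `T c (t + φ) - T c (s + φ)` as a polynomial in `s = X 0`, `t = X 1`
over `ℤ[φ]`. -/
def numer (c : ℕ) : MvPolynomial (Fin 2) (Polynomial ℤ) :=
  Polynomial.aeval (MvPolynomial.X 1 + MvPolynomial.C Polynomial.X) (Tz c)
    - Polynomial.aeval (MvPolynomial.X 0 + MvPolynomial.C Polynomial.X) (Tz c)

lemma numer_dvd (c : ℕ) :
    (MvPolynomial.X 1 - MvPolynomial.X 0 : MvPolynomial (Fin 2) (Polynomial ℤ)) ∣ numer c := by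
  set p : Polynomial (MvPolynomial (Fin 2) (Polynomial ℤ)) :=
    ((Tz c).map (algebraMap ℤ _)).comp
      (Polynomial.X + Polynomial.C (MvPolynomial.C Polynomial.X)) with hp
  have key := Polynomial.sub_dvd_eval_sub (MvPolynomial.X 1) (MvPolynomial.X 0) p
  have hev : ∀ v : MvPolynomial (Fin 2) (Polynomial ℤ),
      p.eval v = Polynomial.aeval (v + MvPolynomial.C Polynomial.X) (Tz c) := by
    intro v
    rw [hp, Polynomial.eval_comp, Polynomial.eval_add, Polynomial.eval_X, Polynomial.eval_C,
      Polynomial.eval_map, Polynomial.aeval_def]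
  rw [hev, hev] at key
  simpa only [numer] using key

def Qp (c : ℕ) : MvPolynomial (Fin 2) (Polynomial ℤ) := (numer_dvd c).choose

lemma Qp_spec (c : ℕ) : numer c = (MvPolynomial.X 1 - MvPolynomial.X 0) * Qp c :=
  (numer_dvd c).choose_spec

lemma Qp_symm (c : ℕ) : (Qp c).IsSymmetric := by
  intro e
  have key : MvPolynomial.rename (Equiv.swap (0 : Fin 2) 1) (Qp c) = Qp c := by
    have ha : ∀ i : Fin 2, (MvPolynomial.rename (Equiv.swap (0 : Fin 2) 1))
        (Polynomial.aeval
          (MvPolynomial.X i + MvPolynomial.C Polynomial.X :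
            MvPolynomial (Fin 2) (Polynomial ℤ)) (Tz c))
        = Polynomial.aeval
            (MvPolynomial.X ((Equiv.swap (0 : Fin 2) 1) i) + MvPolynomial.C Polynomial.X :
              MvPolynomial (Fin 2) (Polynomial ℤ))
            (Tz c) := by
      intro i
      have h := ringhom_aeval_int
        (MvPolynomial.rename (R := Polynomial ℤ) (⇑(Equiv.swap (0 : Fin 2) 1))).toRingHom
        (MvPolynomial.X i + MvPolynomial.C Polynomial.X) (Tz c)
      simp at h
      exact h
    have h1 : MvPolynomial.rename (Equiv.swap (0 : Fin 2) 1) (numer c) = - numer c := by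
      rw [numer, map_sub, ha 1, ha 0]
      rw [Equiv.swap_apply_left, Equiv.swap_apply_right]
      ring
    have h2 : MvPolynomial.rename (Equiv.swap (0 : Fin 2) 1) (numer c)
        = (MvPolynomial.X 0 - MvPolynomial.X 1)
            * MvPolynomial.rename (Equiv.swap (0 : Fin 2) 1) (Qp c) := by
      rw [Qp_spec, map_mul, map_sub, MvPolynomial.rename_X, MvPolynomial.rename_X,
        Equiv.swap_apply_left, Equiv.swap_apply_right]
    have h3 : (MvPolynomial.X 0 - MvPolynomial.X 1 : MvPolynomial (Fin 2) (Polynomial ℤ)) ≠ 0 := by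
      rw [sub_ne_zero]
      exact fun hh => absurd (MvPolynomial.X_injective hh) (by decide)
    have h4 : (MvPolynomial.X 0 - MvPolynomial.X 1)
          * MvPolynomial.rename (Equiv.swap (0 : Fin 2) 1) (Qp c)
        = (MvPolynomial.X 0 - MvPolynomial.X 1) * Qp c := by
      rw [← h2, h1, Qp_spec]
      ring
    exact mul_left_cancel₀ h3 h4
  have hx : ∀ x : Fin 2, x = 0 ∨ x = 1 := by decide
  have h2cases : e = Equiv.refl (Fin 2) ∨ e = Equiv.swap 0 1 := by
    rcases hx (e 0) with h0 | h0
    · left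
      ext x
      rcases hx x with rfl | rfl
      · simp [h0]
      · rcases hx (e 1) with h1 | h1
        · exact absurd (e.injective (h0.trans h1.symm)) (by decide)
        · simp [h1]
    · right
      ext x
      rcases hx x with rfl | rfl
      · simp [h0]
      · rcases hx (e 1) with h1 | h1
        · simp [h1]
        · exact absurd (e.injective (h0.trans h1.symm)) (by decide)
  rcases h2cases with rfl | rfl
  · have hid : ⇑(Equiv.refl (Fin 2)) = id := rfl
    rw [hid, MvPolynomial.rename_id, AlgHom.id_apply]
  · exact key

def Fc (c : ℕ) : MvPolynomial (Fin 2) (Polynomial ℤ) := (sym_rep (Qp_symm c)).choose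

lemma Fc_spec (c : ℕ) :
    (MvPolynomial.aeval fun i : Fin 2 =>
      MvPolynomial.esymm (Fin 2) (Polynomial ℤ) ((i : ℕ) + 1)) (Fc c) = Qp c :=
  (sym_rep (Qp_symm c)).choose_spec

def Hc (c : ℕ) : MvPolynomial (Fin 2) (Polynomial ℤ) :=
  MvPolynomial.aeval
    ![MvPolynomial.X 0 * MvPolynomial.X 1,
      MvPolynomial.X 0 ^ 2 + MvPolynomial.X 1 ^ 2 - 4] (Fc c)

def EV2 (u v : ℝ) : MvPolynomial (Fin 2) (Polynomial ℤ) →+* Polynomial ℝ :=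
  MvPolynomial.eval₂Hom pmap ![Polynomial.C u, Polynomial.C v]

lemma EV2_X0 (u v : ℝ) : EV2 u v (MvPolynomial.X 0) = Polynomial.C u := by
  rw [EV2, MvPolynomial.eval₂Hom_X']
  rfl

lemma EV2_X1 (u v : ℝ) : EV2 u v (MvPolynomial.X 1) = Polynomial.C v := by
  rw [EV2, MvPolynomial.eval₂Hom_X']
  rfl

lemma EV2_C (u v : ℝ) (p : Polynomial ℤ) : EV2 u v (MvPolynomial.C p) = pmap p := by
  rw [EV2, MvPolynomial.eval₂Hom_C]

lemma EV2_Qp (c : ℕ) (s t : ℝ) : EV2 s t (Qp c)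
    = MvPolynomial.eval₂ pmap ![Polynomial.C (s + t), Polynomial.C (s * t)] (Fc c) := by
  rw [← Fc_spec c, MvPolynomial.aeval_def, MvPolynomial.algebraMap_eq]
  have h3 := MvPolynomial.eval₂_comp_left (EV2 s t) MvPolynomial.C
    (fun i : Fin 2 => MvPolynomial.esymm (Fin 2) (Polynomial ℤ) ((i : ℕ) + 1)) (Fc c)
  rw [h3]
  have hc : (EV2 s t).comp MvPolynomial.C = pmap := RingHom.ext fun p => by simp [EV2]
  have hg : (⇑(EV2 s t) ∘ fun i : Fin 2 => MvPolynomial.esymm (Fin 2) (Polynomial ℤ) ((i : ℕ) + 1))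
      = ![Polynomial.C (s + t), Polynomial.C (s * t)] := by
    funext i
    fin_cases i
    · show EV2 s t (MvPolynomial.esymm (Fin 2) (Polynomial ℤ) 1) = Polynomial.C (s + t)
      rw [MvPolynomial.esymm_one, map_sum, Fin.sum_univ_two, EV2_X0, EV2_X1, Polynomial.C_add]
    · show EV2 s t (MvPolynomial.esymm (Fin 2) (Polynomial ℤ) 2) = Polynomial.C (s * t)
      rw [esymm_two, map_mul, EV2_X0, EV2_X1, Polynomial.C_mul]
  rw [hc, hg]

lemma EV2_Hc (c : ℕ) (x y : ℝ) : EV2 x y (Hc c)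
    = MvPolynomial.eval₂ pmap
        ![Polynomial.C (x * y), Polynomial.C (x ^ 2 + y ^ 2 - 4)] (Fc c) := by
  rw [Hc, MvPolynomial.aeval_def, MvPolynomial.algebraMap_eq]
  have h3 := MvPolynomial.eval₂_comp_left (EV2 x y) MvPolynomial.C
    (![MvPolynomial.X 0 * MvPolynomial.X 1,
      MvPolynomial.X 0 ^ 2 + MvPolynomial.X 1 ^ 2 - 4]) (Fc c)
  rw [h3]
  have hc : (EV2 x y).comp MvPolynomial.C = pmap := RingHom.ext fun p => by simp [EV2]
  have hg : (⇑(EV2 x y) ∘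
        ![MvPolynomial.X 0 * MvPolynomial.X 1,
          MvPolynomial.X 0 ^ 2 + MvPolynomial.X 1 ^ 2 - 4])
      = ![Polynomial.C (x * y), Polynomial.C (x ^ 2 + y ^ 2 - 4)] := by
    funext i
    fin_cases i
    · show EV2 x y (MvPolynomial.X 0 * MvPolynomial.X 1) = Polynomial.C (x * y)
      rw [map_mul, EV2_X0, EV2_X1, Polynomial.C_mul]
    · show EV2 x y (MvPolynomial.X 0 ^ 2 + MvPolynomial.X 1 ^ 2 - 4)
        = Polynomial.C (x ^ 2 + y ^ 2 - 4)
      rw [map_sub, map_add, map_pow, map_pow, EV2_X0, EV2_X1, map_ofNat]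
      rw [Polynomial.C_sub, Polynomial.C_add, Polynomial.C_pow, Polynomial.C_pow, map_ofNat]
  rw [hc, hg]

lemma EV2_Hc_Q (c : ℕ) (α β : ℝ) (hα : Real.sin α ≠ 0) (hβ : Real.sin β ≠ 0) (φ : ℝ) :
    (EV2 (2 * Real.cos α) (2 * Real.cos β) (Hc c)).eval φ
      = Q c (2 * Real.cos (α + β)) (2 * Real.cos (α - β)) φ := by
  have hst1 : (2 * Real.cos α) * (2 * Real.cos β)
      = (2 * Real.cos (α + β)) + (2 * Real.cos (α - β)) := by
    rw [Real.cos_add, Real.cos_sub]; ring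
  have hst2 : (2 * Real.cos α) ^ 2 + (2 * Real.cos β) ^ 2 - 4
      = (2 * Real.cos (α + β)) * (2 * Real.cos (α - β)) := by
    rw [Real.cos_add, Real.cos_sub]
    nlinarith [Real.sin_sq_add_cos_sq α, Real.sin_sq_add_cos_sq β]
  have h1 : EV2 (2 * Real.cos α) (2 * Real.cos β) (Hc c)
      = EV2 (2 * Real.cos (α + β)) (2 * Real.cos (α - β)) (Qp c) := by
    rw [EV2_Hc, EV2_Qp, hst1, hst2]
  rw [h1]
  set s := 2 * Real.cos (α + β) with hs
  set t := 2 * Real.cos (α - β) with ht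
  have htsne : t - s ≠ 0 := by
    have hts : t - s = 4 * Real.sin α * Real.sin β := by
      rw [hs, ht, Real.cos_add, Real.cos_sub]; ring
    rw [hts]
    exact mul_ne_zero (mul_ne_zero four_ne_zero hα) hβ
  have harg1 : EV2 s t (MvPolynomial.X 1 + MvPolynomial.C Polynomial.X)
      = Polynomial.C t + Polynomial.X := by
    rw [map_add]
    simp [EV2, pmap]
  have harg0 : EV2 s t (MvPolynomial.X 0 + MvPolynomial.C Polynomial.X)
      = Polynomial.C s + Polynomial.X := by
    rw [map_add]
    simp [EV2, pmap]
  have h1t : EV2 s t (Polynomial.aeval (MvPolynomial.X 1 + MvPolynomial.C Polynomial.X) (Tz c))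
      = Polynomial.aeval (Polynomial.C t + Polynomial.X) (Tz c) := by
    erw [ringhom_aeval_int (EV2 s t), harg1]
    rfl
  have h0t : EV2 s t (Polynomial.aeval (MvPolynomial.X 0 + MvPolynomial.C Polynomial.X) (Tz c))
      = Polynomial.aeval (Polynomial.C s + Polynomial.X) (Tz c) := by
    erw [ringhom_aeval_int (EV2 s t), harg0]
    rfl
  have he : ∀ u : ℝ,
      Polynomial.eval φ (Polynomial.aeval (Polynomial.C u + Polynomial.X) (Tz c))
        = (T c).eval (u + φ) := by
    intro u
    have h := ringhom_aeval_int (Polynomial.evalRingHom φ)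
      (Polynomial.C u + Polynomial.X) (Tz c)
    simp only [coe_evalRingHom] at h
    erw [h]
    have : Polynomial.eval φ (Polynomial.C u + Polynomial.X) = u + φ := by simp
    rw [this, Polynomial.aeval_def, algebraMap_int_eq, ← Polynomial.eval_map, Tz_map]
  have hfinal : Polynomial.eval φ (EV2 s t (numer c))
      = (T c).eval (t + φ) - (T c).eval (s + φ) := by
    rw [numer, map_sub, h1t, h0t, Polynomial.eval_sub, he, he]
  have hq : Polynomial.eval φ (EV2 s t (numer c))
      = (t - s) * Polynomial.eval φ (EV2 s t (Qp c)) := by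
    rw [Qp_spec c, map_mul, map_sub]
    simp [EV2]
  rw [Q, eq_div_iff htsne]
  linear_combination hfinal - hq

def evalx (r : ℝ) : Polynomial (Polynomial ℤ) →+* Polynomial ℝ :=
  Polynomial.eval₂RingHom pmap (Polynomial.C r)

lemma evalx_inj {p q : Polynomial (Polynomial ℤ)}
    (h : ∀ r : ℝ, evalx r p = evalx r q) : p = q := by
  have hinj : Function.Injective
      (Polynomial.map pmap : Polynomial (Polynomial ℤ) → Polynomial (Polynomial ℝ)) :=
    Polynomial.map_injective _ (Polynomial.map_injective _ Int.cast_injective)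
  apply hinj
  have hroot : ∀ r : ℝ,
      (Polynomial.map pmap p - Polynomial.map pmap q).IsRoot (Polynomial.C r) := by
    intro r
    have hr := h r
    simp only [evalx, coe_eval₂RingHom] at hr
    rw [IsRoot.def, eval_sub, Polynomial.eval_map, Polynomial.eval_map, hr, sub_self]
  have hinf : {x : Polynomial ℝ | (Polynomial.map pmap p - Polynomial.map pmap q).IsRoot x}.Infinite :=
    Set.infinite_of_injective_forall_mem
      (f := fun r : ℝ => (Polynomial.C r : Polynomial ℝ)) Polynomial.C_injective hroot
  have h0 := Polynomial.eq_zero_of_infinite_isRoot _ hinf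
  rw [sub_eq_zero] at h0
  exact h0

lemma Icc_prod_fin {M : Type} [CommMonoid M] (n : ℕ) (f : ℕ → M) :
    ∏ j ∈ Finset.Icc 1 n, f j = ∏ k : Fin n, f ((k : ℕ) + 1) := by
  have hmap : Finset.Icc 1 n
      = Finset.map ⟨fun i => i + 1, fun a b h => by have : a + 1 = b + 1 := h; omega⟩ (Finset.range n) := by
    ext x
    constructor
    · intro hx
      rw [Finset.mem_Icc] at hx
      rw [Finset.mem_map]
      exact ⟨x - 1, Finset.mem_range.mpr (by omega), by show x - 1 + 1 = x; omega⟩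
    · intro hx
      rw [Finset.mem_map] at hx
      obtain ⟨y, hy, hxy⟩ := hx
      rw [Finset.mem_range] at hy
      rw [Finset.mem_Icc]
      have hyx : y + 1 = x := hxy
      omega
  rw [hmap, Finset.prod_map]
  rw [Fin.prod_univ_eq_prod_range (fun k => f (k + 1)) n]
  rfl


def bC (N : ℕ) : Polynomial ℤ →+* MvPolynomial (Fin N) (Polynomial (Polynomial ℤ)) :=
  (MvPolynomial.C).comp Polynomial.C

def gk (N : ℕ) (k : Fin N) : Fin 2 → MvPolynomial (Fin N) (Polynomial (Polynomial ℤ)) :=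
  ![MvPolynomial.C Polynomial.X, MvPolynomial.X k]

def Pb (N c : ℕ) : MvPolynomial (Fin N) (Polynomial (Polynomial ℤ)) :=
  ∏ k : Fin N, MvPolynomial.eval₂ (bC N) (gk N k) (Hc c)

lemma Pb_symm (N c : ℕ) : (Pb N c).IsSymmetric := by
  intro e
  rw [Pb, map_prod]
  have hren : ∀ k : Fin N,
      MvPolynomial.rename ⇑e (MvPolynomial.eval₂ (bC N) (gk N k) (Hc c))
        = MvPolynomial.eval₂ (bC N) (gk N (e k)) (Hc c) := by
    intro k
    show (MvPolynomial.rename (R := Polynomial (Polynomial ℤ)) ⇑e).toRingHom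
        (MvPolynomial.eval₂ (bC N) (gk N k) (Hc c))
      = MvPolynomial.eval₂ (bC N) (gk N (e k)) (Hc c)
    rw [MvPolynomial.eval₂_comp_left
      ((MvPolynomial.rename (R := Polynomial (Polynomial ℤ)) ⇑e).toRingHom) (bC N) (gk N k)
      (Hc c)]
    have hc : ((MvPolynomial.rename (R := Polynomial (Polynomial ℤ)) ⇑e).toRingHom).comp (bC N)
        = bC N := by
      apply RingHom.ext
      intro a
      simp [bC]
    have hg : (⇑(MvPolynomial.rename (R := Polynomial (Polynomial ℤ)) ⇑e).toRingHom ∘ gk N k)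
        = gk N (e k) := by
      funext v
      fin_cases v
      · show MvPolynomial.rename ⇑e (MvPolynomial.C Polynomial.X) = MvPolynomial.C Polynomial.X
        simp
      · show MvPolynomial.rename ⇑e (MvPolynomial.X k) = MvPolynomial.X (e k)
        simp
    rw [hc, hg]
  rw [Finset.prod_congr rfl fun k _ => hren k]
  exact Equiv.prod_comp e fun k => MvPolynomial.eval₂ (bC N) (gk N k) (Hc c)

def Pa (M : ℕ) (L : Polynomial (Polynomial ℤ)) : MvPolynomial (Fin M) (Polynomial ℤ) :=
  ∏ i : Fin M, Polynomial.eval₂ (MvPolynomial.C) (MvPolynomial.X i) L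

lemma Pa_symm (M : ℕ) (L : Polynomial (Polynomial ℤ)) : (Pa M L).IsSymmetric := by
  intro e
  rw [Pa, map_prod]
  have hren : ∀ i : Fin M,
      MvPolynomial.rename ⇑e (Polynomial.eval₂ (MvPolynomial.C) (MvPolynomial.X i) L)
        = Polynomial.eval₂ (MvPolynomial.C) (MvPolynomial.X (e i)) L := by
    intro i
    show (MvPolynomial.rename (R := Polynomial ℤ) ⇑e).toRingHom
        (Polynomial.eval₂ (MvPolynomial.C) (MvPolynomial.X i) L)
      = Polynomial.eval₂ (MvPolynomial.C) (MvPolynomial.X (e i)) L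
    rw [Polynomial.hom_eval₂]
    have hc : ((MvPolynomial.rename (R := Polynomial ℤ) ⇑e).toRingHom).comp
        (MvPolynomial.C (σ := Fin M)) = MvPolynomial.C := by
      apply RingHom.ext
      intro a
      simp
    have hx : (MvPolynomial.rename (R := Polynomial ℤ) ⇑e).toRingHom (MvPolynomial.X i)
        = MvPolynomial.X (e i) := by simp
    rw [hc, hx]
  rw [Finset.prod_congr rfl fun i _ => hren i]
  exact Equiv.prod_comp e fun i => Polynomial.eval₂ (MvPolynomial.C) (MvPolynomial.X i) L

lemma eval_Pb (N c : ℕ) (r : ℝ) (yv : Fin N → ℝ) :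
    MvPolynomial.eval₂ (evalx r) (fun k => Polynomial.C (yv k)) (Pb N c)
      = ∏ k : Fin N, EV2 r (yv k) (Hc c) := by
  have hE : MvPolynomial.eval₂ (evalx r) (fun k => Polynomial.C (yv k)) (Pb N c)
      = MvPolynomial.eval₂Hom (evalx r) (fun k => Polynomial.C (yv k)) (Pb N c) := rfl
  rw [hE, Pb, map_prod]
  refine Finset.prod_congr rfl fun k _ => ?_
  have h := MvPolynomial.eval₂_comp_left
    (MvPolynomial.eval₂Hom (evalx r) (fun k => Polynomial.C (yv k))) (bC N) (gk N k) (Hc c)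
  have hc : (MvPolynomial.eval₂Hom (evalx r) (fun k => Polynomial.C (yv k))).comp (bC N)
      = pmap := by
    apply RingHom.ext
    intro p
    simp [bC, evalx]
  have hg : (⇑(MvPolynomial.eval₂Hom (evalx r) (fun k => Polynomial.C (yv k))) ∘ gk N k)
      = ![Polynomial.C r, Polynomial.C (yv k)] := by
    funext v
    fin_cases v
    · show MvPolynomial.eval₂Hom (evalx r) (fun k => Polynomial.C (yv k))
          (MvPolynomial.C Polynomial.X) = Polynomial.C r
      rw [MvPolynomial.eval₂Hom_C]
      simp [evalx]
    · show MvPolynomial.eval₂Hom (evalx r) (fun k => Polynomial.C (yv k))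
          (MvPolynomial.X k) = Polynomial.C (yv k)
      rw [MvPolynomial.eval₂Hom_X']
  rw [h, hc, hg]
  rfl

lemma eval_Pa (M : ℕ) (L : Polynomial (Polynomial ℤ)) (uv : Fin M → ℝ) :
    MvPolynomial.eval₂ pmap (fun i => Polynomial.C (uv i)) (Pa M L)
      = ∏ i : Fin M, Polynomial.eval₂ pmap (Polynomial.C (uv i)) L := by
  have hE : MvPolynomial.eval₂ pmap (fun i => Polynomial.C (uv i)) (Pa M L)
      = MvPolynomial.eval₂Hom pmap (fun i => Polynomial.C (uv i)) (Pa M L) := rfl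
  rw [hE, Pa, map_prod]
  refine Finset.prod_congr rfl fun i _ => ?_
  have h := Polynomial.hom_eval₂ (f := (MvPolynomial.C : Polynomial ℤ →+* _))
    (g := MvPolynomial.eval₂Hom pmap (fun i => Polynomial.C (uv i))) (p := L)
    (MvPolynomial.X i)
  have hc : (MvPolynomial.eval₂Hom pmap (fun i => Polynomial.C (uv i))).comp
      (MvPolynomial.C) = pmap := by
    apply RingHom.ext
    intro p
    simp
  have hx : MvPolynomial.eval₂Hom pmap (fun i => Polynomial.C (uv i)) (MvPolynomial.X i)
      = Polynomial.C (uv i) := by rw [MvPolynomial.eval₂Hom_X']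
  rw [h, hc, hx]

def vb (b : ℕ) : Fin (b - 1) → Polynomial (Polynomial ℤ) := fun k =>
  Polynomial.C (Polynomial.C
    ((-1) ^ ((k : ℕ) + 1) * (Sz (b - 1)).coeff ((b - 1) - ((k : ℕ) + 1))))

def va (m : ℕ) : Fin m → Polynomial ℤ := fun i =>
  Polynomial.C ((-1) ^ ((i : ℕ) + 1) * (Wz m).coeff (m - ((i : ℕ) + 1)))

lemma hyp_b (b : ℕ) (r : ℝ) (k : Fin (b - 1)) :
    evalx r (vb b k) = (Multiset.map
      (fun j : Fin (b - 1) => Polynomial.C (2 * Real.cos (((j : ℕ) + 1) * Real.pi / b)))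
      (Finset.univ : Finset (Fin (b - 1))).val).esymm ((k : ℕ) + 1) := by
  rw [esymm_map_C, esymm_val (b - 1) (Sz (b - 1))
    (fun j : Fin (b - 1) => 2 * Real.cos (((j : ℕ) + 1) * Real.pi / b)) (Sz_prod b)
    ((k : ℕ) + 1) (by have := k.isLt; omega)]
  have hl : evalx r (vb b k) = Polynomial.C
      ((((-1) ^ ((k : ℕ) + 1) * (Sz (b - 1)).coeff ((b - 1) - ((k : ℕ) + 1)) : ℤ)) : ℝ) := by
    simp only [vb, evalx, coe_eval₂RingHom, Polynomial.eval₂_C, pmap, coe_mapRingHom,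
      Polynomial.map_C, Int.coe_castRingHom]
  rw [hl]
  congr 1
  push_cast
  ring

lemma hyp_a (m : ℕ) (i : Fin m) :
    pmap (va m i) = (Multiset.map
      (fun j : Fin m =>
        Polynomial.C ((2 * Real.cos (((j : ℕ) + 1) * Real.pi / (2 * m + 1))) ^ 2))
      (Finset.univ : Finset (Fin m)).val).esymm ((i : ℕ) + 1) := by
  rw [esymm_map_C, esymm_val m (Wz m)
    (fun j : Fin m => (2 * Real.cos (((j : ℕ) + 1) * Real.pi / (2 * m + 1))) ^ 2) (Wz_prod m)
    ((i : ℕ) + 1) (by have := i.isLt; omega)]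
  have hl : pmap (va m i) = Polynomial.C
      ((((-1) ^ ((i : ℕ) + 1) * (Wz m).coeff (m - ((i : ℕ) + 1)) : ℤ)) : ℝ) := by
    simp only [va, pmap, coe_mapRingHom, Polynomial.map_C, Int.coe_castRingHom]
  rw [hl]
  congr 1
  push_cast
  ring

end Aux

theorem discriminant_poly_int_coeffs (a b c : ℕ) (hab : Nat.Coprime a b)
    (ha : Odd a) :
    ∃ p : Polynomial ℤ, ∀ φ : ℝ, (Polynomial.aeval φ) p = R a b c φ := by
  obtain ⟨m, rfl⟩ := ha
  obtain ⟨K, hK⟩ := master (Pb (b - 1) c) (Pb_symm (b - 1) c) (vb b)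
  have hKev : ∀ r : ℝ, evalx r K
      = ∏ k : Fin (b - 1),
          EV2 r (2 * Real.cos (((k : ℕ) + 1) * Real.pi / b)) (Hc c) := by
    intro r
    rw [hK (Polynomial ℝ) (evalx r)
      (fun k => Polynomial.C (2 * Real.cos (((k : ℕ) + 1) * Real.pi / b))) (hyp_b b r),
      eval_Pb]
  have hEVneg : ∀ (u v' : ℝ), EV2 (-u) (-v') (Hc c) = EV2 u v' (Hc c) := by
    intro u v'
    rw [EV2_Hc, EV2_Hc, show (-u) * (-v') = u * v' by ring,
      show (-u) ^ 2 + (-v') ^ 2 - 4 = u ^ 2 + v' ^ 2 - 4 by ring]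
  have hKeven : ∀ r : ℝ, evalx (-r) K = evalx r K := by
    intro r
    rw [hKev, hKev]
    have hybrev : ∀ k : Fin (b - 1),
        2 * Real.cos (((Fin.rev k : ℕ) + 1) * Real.pi / b)
          = -(2 * Real.cos (((k : ℕ) + 1) * Real.pi / b)) := by
      intro k
      have hkb : (k : ℕ) + 2 ≤ b := by have := k.isLt; omega
      have hval : ((Fin.rev k : ℕ) : ℝ) = (b : ℝ) - 2 - (k : ℕ) := by
        rw [Fin.val_rev]
        have h1 : b - 1 - ((k : ℕ) + 1) = b - 2 - (k : ℕ) := by omega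
        rw [h1, Nat.cast_sub (by omega), Nat.cast_sub (by omega)]
        push_cast
        ring
      have hbne : (b : ℝ) ≠ 0 := by
        have : (0 : ℝ) < b := by exact_mod_cast (by omega : 0 < b)
        exact ne_of_gt this
      have harg : (((Fin.rev k : ℕ) : ℝ) + 1) * Real.pi / b
          = Real.pi - (((k : ℕ) : ℝ) + 1) * Real.pi / b := by
        rw [hval]
        field_simp
        ring
      rw [harg, Real.cos_pi_sub]
      ring
    have hstep := Fintype.prod_bijective (Fin.rev : Fin (b - 1) → Fin (b - 1))
      Fin.rev_involutive.bijective
      (fun k => EV2 r (2 * Real.cos (((k : ℕ) + 1) * Real.pi / b)) (Hc c))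
      (fun k => EV2 (-r) (2 * Real.cos (((k : ℕ) + 1) * Real.pi / b)) (Hc c))
      (fun k => by
        show EV2 r (2 * Real.cos (((k : ℕ) + 1) * Real.pi / b)) (Hc c)
          = EV2 (-r) (2 * Real.cos (((Fin.rev k : ℕ) + 1) * Real.pi / b)) (Hc c)
        rw [hybrev k, hEVneg])
    exact hstep.symm
  have hC2 : K.comp (-Polynomial.X) = K := by
    apply evalx_inj
    intro r
    have h1 : evalx r (K.comp (-Polynomial.X)) = evalx (-r) K := by
      show Polynomial.eval₂ pmap (Polynomial.C r) (K.comp (-Polynomial.X))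
        = Polynomial.eval₂ pmap (Polynomial.C (-r)) K
      rw [Polynomial.eval₂_comp]
      congr 1
      simp
    rw [h1, hKeven]
  have hodd : ∀ j, Odd j → K.coeff j = 0 := by
    intro j hj
    have h := comp_neg_X_coeff K j
    rw [hC2, hj.neg_one_pow] at h
    have h2 : (2 : Polynomial ℤ) * K.coeff j = 0 := by linear_combination h
    rcases mul_eq_zero.mp h2 with h3 | h3
    · exact absurd h3 two_ne_zero
    · exact h3
  obtain ⟨L, hL⟩ := even_comp K hodd
  obtain ⟨p0, hp0⟩ := master (Pa m L) (Pa_symm m L) (va m)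
  have hp0ev : pmap p0 = ∏ i : Fin m,
      Polynomial.eval₂ pmap
        (Polynomial.C ((2 * Real.cos (((i : ℕ) + 1) * Real.pi / (2 * m + 1))) ^ 2)) L := by
    rw [hp0 (Polynomial ℝ) pmap
      (fun i => Polynomial.C ((2 * Real.cos (((i : ℕ) + 1) * Real.pi / (2 * m + 1))) ^ 2))
      (hyp_a m), eval_Pa]
  have hLK : ∀ u : ℝ, Polynomial.eval₂ pmap (Polynomial.C (u ^ 2)) L = evalx u K := by
    intro u
    have h1 : evalx u K
        = Polynomial.eval₂ pmap (Polynomial.C u) (L.comp (Polynomial.X ^ 2)) := by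
      rw [hL]
      rfl
    rw [h1, Polynomial.eval₂_comp]
    congr 1
    rw [Polynomial.eval₂_X_pow, ← Polynomial.C_pow]
  refine ⟨p0, ?_⟩
  intro φ
  have hstart : Polynomial.aeval φ p0 = Polynomial.eval φ (pmap p0) := by
    rw [Polynomial.aeval_def, algebraMap_int_eq, ← Polynomial.eval_map]
    rfl
  have hfac : ∀ i : Fin m,
      Polynomial.eval₂ pmap
        (Polynomial.C ((2 * Real.cos (((i : ℕ) + 1) * Real.pi / (2 * m + 1))) ^ 2)) L
      = ∏ k : Fin (b - 1),
          EV2 (2 * Real.cos (((i : ℕ) + 1) * Real.pi / (2 * m + 1)))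
            (2 * Real.cos (((k : ℕ) + 1) * Real.pi / b)) (Hc c) := by
    intro i
    rw [hLK, hKev]
  have hQ : ∀ (i : Fin m) (k : Fin (b - 1)),
      Polynomial.eval φ
        (EV2 (2 * Real.cos (((i : ℕ) + 1) * Real.pi / (2 * m + 1)))
          (2 * Real.cos (((k : ℕ) + 1) * Real.pi / b)) (Hc c))
        = Q c
            (2 * Real.cos ((((i : ℕ) + 1) * Real.pi / (2 * m + 1))
              + (((k : ℕ) + 1) * Real.pi / b)))
            (2 * Real.cos ((((i : ℕ) + 1) * Real.pi / (2 * m + 1))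
              - (((k : ℕ) + 1) * Real.pi / b))) φ := by
    intro i k
    refine EV2_Hc_Q c _ _ ?_ ?_ φ
    · refine ne_of_gt (Real.sin_pos_of_pos_of_lt_pi ?_ ?_)
      · positivity
      · rw [div_lt_iff₀ (by positivity)]
        have him : ((i : ℕ) : ℝ) + 1 ≤ m := by
          exact_mod_cast (by have := i.isLt; omega : (i : ℕ) + 1 ≤ m)
        nlinarith [Real.pi_pos]
    · have hb0 : (0 : ℝ) < b := by
        exact_mod_cast (by have := k.isLt; omega : 0 < b)
      refine ne_of_gt (Real.sin_pos_of_pos_of_lt_pi ?_ ?_)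
      · positivity
      · rw [div_lt_iff₀ hb0]
        have hkm : ((k : ℕ) : ℝ) + 1 < b := by
          exact_mod_cast (by have := k.isLt; omega : (k : ℕ) + 1 < b)
        nlinarith [Real.pi_pos]
  have hRform : R (2 * m + 1) b c φ = ∏ i : Fin m, ∏ k : Fin (b - 1),
      Q c
        (2 * Real.cos ((((i : ℕ) + 1) * Real.pi / (2 * m + 1))
          + (((k : ℕ) + 1) * Real.pi / b)))
        (2 * Real.cos ((((i : ℕ) + 1) * Real.pi / (2 * m + 1))
          - (((k : ℕ) + 1) * Real.pi / b))) φ := by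
    rw [R, show (2 * m + 1 - 1) / 2 = m from by omega, Icc_prod_fin]
    refine Finset.prod_congr rfl fun i _ => ?_
    rw [Icc_prod_fin]
    refine Finset.prod_congr rfl fun k _ => ?_
    have hcast1 : (((i : ℕ) + 1 : ℕ) : ℝ) = ((i : ℕ) : ℝ) + 1 := by push_cast; ring
    have hcast2 : (((k : ℕ) + 1 : ℕ) : ℝ) = ((k : ℕ) : ℝ) + 1 := by push_cast; ring
    have hcast3 : (((2 * m + 1 : ℕ)) : ℝ) = 2 * (m : ℝ) + 1 := by push_cast; ring
    rw [hcast1, hcast2, hcast3]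
  rw [hstart, hp0ev, hRform]
  rw [Finset.prod_congr rfl fun i _ => hfac i, Polynomial.eval_prod]
  refine Finset.prod_congr rfl fun i _ => ?_
  rw [Polynomial.eval_prod]
  exact Finset.prod_congr rfl fun k _ => hQ i k
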